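/- Let X be a Hilbert space and Φ_lsc := {φ : X → ℝ : φ(x) = -a‖x‖² + ⟨ℓ,x⟩ + c, ℓ ∈ X, a ≥ 0, c ∈ ℝ}. A proper function f : X → (-∞,+∞] is Φ_lsc-convex if and only if f is lower semicontinuous on X and there exist a ≥ 0 and c ∈ ℝ such that f(x) ≥ -a‖x‖² - c for all x ∈ X. -/

import Mathlib

theorem phiLsc_convex_iff_lsc_and_quadratic_minorant
    {X : Type*} [NormedAddCommGroup X] [InnerProductSpace ℝ X] [CompleteSpace X]
    (f : X → EReal) (hbot : ∀ x, f x ≠ ⊥) (hproper : ∃ x, f x ≠ ⊤) :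
    (∀ x : X, f x = ⨆ φ : {φ : X → ℝ //
        (∃ (a : ℝ) (ℓ : X) (c : ℝ), 0 ≤ a ∧
          φ = fun x' => -a * ‖x'‖ ^ 2 + inner ℝ ℓ x' + c) ∧
        ∀ x', ((φ x' : EReal) ≤ f x')}, ((φ.1 x : EReal))) ↔
      (LowerSemicontinuous f ∧
        ∃ (a c : ℝ), 0 ≤ a ∧ ∀ x : X, ((-a * ‖x‖ ^ 2 - c : ℝ) : EReal) ≤ f x) := by
  constructor
  · intro hsup
    constructor
    · have hf : f = fun x => ⨆ φ : {φ : X → ℝ //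
        (∃ (a : ℝ) (ℓ : X) (c : ℝ), 0 ≤ a ∧
          φ = fun x' => -a * ‖x'‖ ^ 2 + inner ℝ ℓ x' + c) ∧
        ∀ x', ((φ x' : EReal) ≤ f x')}, ((φ.1 x : EReal)) := funext hsup
      rw [hf]
      apply lowerSemicontinuous_iSup
      intro φ
      obtain ⟨⟨a, ℓ, c, ha, hφ⟩, _⟩ := φ.2
      have : Continuous φ.1 := by
        rw [hφ]
        have h1 : Continuous fun x' : X => -a * ‖x'‖ ^ 2 := by fun_prop
        have h2 : Continuous fun x' : X => (inner ℝ ℓ x' : ℝ) :=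
          continuous_const.inner continuous_id
        exact (h1.add h2).add continuous_const
      exact (continuous_coe_real_ereal.comp this).lowerSemicontinuous
    · obtain ⟨x₀, hx₀⟩ := hproper
      have hne : Nonempty {φ : X → ℝ //
        (∃ (a : ℝ) (ℓ : X) (c : ℝ), 0 ≤ a ∧
          φ = fun x' => -a * ‖x'‖ ^ 2 + inner ℝ ℓ x' + c) ∧
        ∀ x', ((φ x' : EReal) ≤ f x')} := by
        by_contra h
        haveI := not_nonempty_iff.mp h
        have := hsup x₀
        rw [iSup_of_empty] at this
        exact hbot x₀ (by simpa using this)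
      obtain ⟨φ, ⟨a, ℓ, c, ha, hφ⟩, hle⟩ := hne
      refine ⟨a + 1/2, ‖ℓ‖^2/2 - c, by linarith, fun x => ?_⟩
      refine le_trans ?_ (hle x)
      rw [EReal.coe_le_coe_iff, hφ]
      have h1 : -(‖ℓ‖ * ‖x‖) ≤ inner ℝ ℓ x := by
        have := abs_real_inner_le_norm ℓ x
        rw [abs_le] at this; exact this.1
      show -(a + 1/2) * ‖x‖ ^ 2 - (‖ℓ‖^2/2 - c) ≤ -a * ‖x‖ ^ 2 + inner ℝ ℓ x + c
      nlinarith [sq_nonneg (‖ℓ‖ - ‖x‖)]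
  · rintro ⟨hlsc, a, c, ha, hm⟩
    intro x₀
    refine le_antisymm ?_ (iSup_le fun φ => φ.2.2 x₀)
    rw [← EReal.ge_of_forall_gt_iff_ge]
    intro r hr
    have := hlsc x₀ _ hr
    rw [Metric.eventually_nhds_iff] at this
    obtain ⟨δ, hδ, hball⟩ := this
    obtain ⟨K, hK⟩ : ∃ K : ℝ, K = max 0 (r + 2*a*‖x₀‖^2 + c) := ⟨_, rfl⟩
    obtain ⟨M, hM⟩ : ∃ M : ℝ, M = 2*a + K / δ^2 := ⟨_, rfl⟩
    have hK0 : 0 ≤ K := hK ▸ le_max_left _ _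
    have hKle : r + 2 * a * ‖x₀‖ ^ 2 + c ≤ K := hK ▸ le_max_right _ _
    have hM0 : 0 ≤ M := by rw [hM]; positivity
    have hmem : (∃ (a : ℝ) (ℓ : X) (c : ℝ), 0 ≤ a ∧
          (fun x => r - M * ‖x - x₀‖^2) = fun x' => -a * ‖x'‖ ^ 2 + inner ℝ ℓ x' + c) ∧
        ∀ x', (((r - M * ‖x' - x₀‖^2 : ℝ) : EReal) ≤ f x') := by
      constructor
      · refine ⟨M, (2*M) • x₀, r - M * ‖x₀‖^2, hM0, ?_⟩
        funext x
        rw [norm_sub_sq_real, real_inner_smul_left, real_inner_comm]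
        ring
      · intro x
        rcases lt_or_ge (dist x x₀) δ with h | h
        · refine le_trans ?_ (hball h).le
          rw [EReal.coe_le_coe_iff]
          nlinarith [sq_nonneg ‖x - x₀‖]
        · refine le_trans ?_ (hm x)
          rw [EReal.coe_le_coe_iff]
          have hd : δ ≤ ‖x - x₀‖ := by rwa [dist_eq_norm] at h
          have hnx : ‖x‖ ≤ ‖x - x₀‖ + ‖x₀‖ := by
            have := norm_le_norm_add_norm_sub' x x₀
            linarith
          have hδ2 : (0:ℝ) < δ^2 := by positivity
          have h2 : K ≤ K / δ ^ 2 * ‖x - x₀‖ ^ 2 := by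
            rw [div_mul_eq_mul_div, le_div_iff₀ hδ2]
            have : δ^2 ≤ ‖x - x₀‖^2 := by nlinarith
            nlinarith
          have hmul : ‖x‖ * ‖x‖ ≤ (‖x - x₀‖ + ‖x₀‖) * (‖x - x₀‖ + ‖x₀‖) :=
            mul_le_mul hnx hnx (norm_nonneg x) (by positivity)
          have h3 : a * ‖x‖ ^ 2 ≤ 2*a*‖x - x₀‖ ^ 2 + 2*a*‖x₀‖ ^ 2 := by
            have h4 : ‖x‖^2 ≤ 2*‖x - x₀‖^2 + 2*‖x₀‖^2 := by
              nlinarith [sq_nonneg (‖x - x₀‖ - ‖x₀‖)]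
            nlinarith
          nlinarith
    calc (r : EReal) = (((fun x => r - M * ‖x - x₀‖^2) x₀ : ℝ) : EReal) := by
          norm_num
      _ ≤ _ := le_iSup (fun ψ : {φ : X → ℝ //
        (∃ (a : ℝ) (ℓ : X) (c : ℝ), 0 ≤ a ∧
          φ = fun x' => -a * ‖x'‖ ^ 2 + inner ℝ ℓ x' + c) ∧
        ∀ x', ((φ x' : EReal) ≤ f x')} => ((ψ.1 x₀ : EReal)))
        ⟨fun x => r - M * ‖x - x₀‖^2, hmem⟩
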